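/- Let (W_k)_{k∈ℤ} be a strictly stationary sequence and (V_k)_{k∈ℤ} i.i.d. Bernoulli(p) independent of W, 0 < p < 1. Define the spaced sequence W̃ by placing W_j at the j-th position k where V_k = 1 (in increasing order, indexed so that κ_0 ≤ 0 < κ_1) and 0 where V_k = 0. Then W̃ is strictly stationary. -/

import Mathlib

open MeasureTheory ProbabilityTheory

/-- The "spaced" sequence `S(W,V)` of Construction 2.2: the terms of `W` are
placed, in order, at the (random) positions `… < κ₋₁ < κ₀ ≤ 0 < κ₁ < κ₂ < …`
where `V = 1` (indexed so that `κ₀ ≤ 0 < κ₁`), and `0` is placed where `V = 0`.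
Concretely, if `V_k = 1` then the index `j` with `κ_j = k` is the number of
ones of `V` in `[1,k]` when `k ≥ 1`, and minus the number of ones in `[k+1,0]`
when `k ≤ 0`. -/
noncomputable def spacedSeq {Ω : Type*} (W : ℤ → Ω → ℝ) (V : ℤ → Ω → ℕ)
    (k : ℤ) (ω : Ω) : ℝ :=
  if V k ω = 1 then
    (if 1 ≤ k then
      W ((((Finset.Icc 1 k).filter (fun i => V i ω = 1)).card : ℤ)) ω
    else
      W (-((((Finset.Icc (k + 1) 0).filter (fun i => V i ω = 1)).card : ℤ))) ω)
  else 0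

section helpers
variable {α : Type*} [MeasurableSpace α]

lemma measurable_eval_of_meas {β : Type*} [MeasurableSpace β] {f : α → ℤ} {g : α → ℤ → β}
    (hf : Measurable f) (hg : Measurable g) : Measurable fun a => g a (f a) := by
  have he : Measurable (fun q : (ℤ → β) × ℤ => q.1 q.2) :=
    measurable_from_prod_countable_left (fun i => measurable_pi_apply i)
  exact he.comp (hg.prodMk hf)

/-- the spaced-sequence functional on sequence space -/
noncomputable def Phi (k : ℤ) (q : (ℤ → ℕ) × (ℤ → ℝ)) : ℝ :=
  if q.1 k = 1 then
    (if 1 ≤ k then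
      q.2 ((((Finset.Icc 1 k).filter (fun i => q.1 i = 1)).card : ℤ))
    else
      q.2 (-((((Finset.Icc (k + 1) 0).filter (fun i => q.1 i = 1)).card : ℤ))))
  else 0

lemma measurable_count (s : Finset ℤ) :
    Measurable (fun v : ℤ → ℕ => (((s.filter (fun i => v i = 1)).card : ℤ))) := by
  have : (fun v : ℤ → ℕ => (((s.filter (fun i => v i = 1)).card : ℤ)))
      = fun v => ∑ i ∈ s, (if v i = 1 then (1 : ℤ) else 0) := by
    funext v
    rw [Finset.card_filter]
    push_cast
    rfl
  rw [this]
  exact Finset.measurable_sum _ (fun i _ =>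
    Measurable.ite ((measurable_pi_apply i) (measurableSet_singleton 1)) measurable_const
      measurable_const)

lemma measurable_Phi (k : ℤ) : Measurable (Phi k) := by
  unfold Phi
  apply Measurable.ite
  · exact (measurable_pi_apply k).comp measurable_fst (measurableSet_singleton 1)
  · split_ifs with h
    · exact measurable_eval_of_meas ((measurable_count _).comp measurable_fst) measurable_snd
    · exact measurable_eval_of_meas (((measurable_count _).comp measurable_fst).neg)
        measurable_snd
  · exact measurable_const

end helpers

lemma card_filter_shift (a b : ℤ) (v : ℤ → ℕ) :
    ((Finset.Icc a b).filter (fun i => v (i + 1) = 1)).card =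
      ((Finset.Icc (a + 1) (b + 1)).filter (fun i => v i = 1)).card := by
  apply Finset.card_nbij' (fun i => i + 1) (fun j => j - 1)
  · intro i hi
    simp only [Finset.mem_coe, Finset.mem_filter, Finset.mem_Icc] at hi ⊢
    exact ⟨⟨by omega, by omega⟩, hi.2⟩
  · intro j hj
    simp only [Finset.mem_coe, Finset.mem_filter, Finset.mem_Icc] at hj ⊢
    exact ⟨⟨by omega, by omega⟩, by simpa using hj.2⟩
  · intro i _; dsimp only; omega
  · intro j _; dsimp only; omega

lemma card_filter_cons_right (a b : ℤ) (hab : a ≤ b + 1) (v : ℤ → ℕ) :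
    (((Finset.Icc a (b + 1)).filter (fun i => v i = 1)).card : ℤ) =
      (((Finset.Icc a b).filter (fun i => v i = 1)).card : ℤ)
        + (if v (b + 1) = 1 then 1 else 0) := by
  have h : Finset.Icc a (b + 1) = insert (b + 1) (Finset.Icc a b) := by
    ext x; simp only [Finset.mem_Icc, Finset.mem_insert]; omega
  have hnot : b + 1 ∉ Finset.Icc a b := by simp [Finset.mem_Icc]
  rw [h, Finset.filter_insert]
  split_ifs with hp
  · rw [Finset.card_insert_of_notMem (by simp [Finset.mem_filter, hnot])]
    push_cast; ring
  · simp

lemma card_filter_cons_left (a b : ℤ) (hab : a ≤ b) (v : ℤ → ℕ) :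
    (((Finset.Icc a b).filter (fun i => v i = 1)).card : ℤ) =
      (if v a = 1 then 1 else 0) + (((Finset.Icc (a + 1) b).filter (fun i => v i = 1)).card : ℤ) := by
  have h : Finset.Icc a b = insert a (Finset.Icc (a + 1) b) := by
    ext x; simp only [Finset.mem_Icc, Finset.mem_insert]; omega
  have hnot : a ∉ Finset.Icc (a + 1) b := by simp [Finset.mem_Icc]
  rw [h, Finset.filter_insert]
  split_ifs with hp
  · rw [Finset.card_insert_of_notMem (by simp [Finset.mem_filter, hnot])]
    push_cast; ring
  · simp

lemma spacedSeq_shift {Ω : Type*} (W : ℤ → Ω → ℝ) (V : ℤ → Ω → ℕ) (k : ℤ) (ω : Ω) :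
    spacedSeq W V (k + 1) ω =
      spacedSeq (fun j ω => W (j + (if V 1 ω = 1 then 1 else 0)) ω)
        (fun i ω => V (i + 1) ω) k ω := by
  unfold spacedSeq
  by_cases hV : V (k + 1) ω = 1
  · simp only [hV, if_true]
    rcases lt_trichotomy k 0 with hk | hk | hk
    · -- k ≤ -1 : both use the negative branch
      have h1 : ¬ (1 ≤ k + 1) := by omega
      have h2 : ¬ (1 ≤ k) := by omega
      simp only [h1, h2, if_false]
      have hc := card_filter_shift (k + 1) 0 (fun i => V i ω)
      have hsplit := card_filter_cons_right (k + 1 + 1) 0 (by omega) (fun i => V i ω)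
      congr 1
      rw [hc, hsplit]
      ring
    · -- k = 0
      subst hk
      norm_num at hV ⊢
      simp [Finset.filter_singleton, hV]
    · -- k ≥ 1
      have h1 : (1:ℤ) ≤ k + 1 := by omega
      have h2 : (1:ℤ) ≤ k := hk
      simp only [h1, h2, if_true]
      have hc := card_filter_shift 1 k (fun i => V i ω)
      have hsplit := card_filter_cons_left 1 (k + 1) (by omega) (fun i => V i ω)
      congr 1
      rw [hc, hsplit]
      ring
  · simp only [hV, if_false]

section spacedAux
variable {Ω : Type*} [MeasurableSpace Ω] {μ : Measure Ω} [IsProbabilityMeasure μ]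
  {W : ℤ → Ω → ℝ} {V : ℤ → Ω → ℕ}

lemma V_mem_apply' (hVmeas : ∀ k, Measurable (V k))
    (hV01 : ∀ k ω, V k ω = 0 ∨ V k ω = 1) {p : ℝ}
    (hVp : ∀ k, μ {ω | V k ω = 1} = ENNReal.ofReal p)
    (k : ℤ) (a : Set ℕ) : μ {ω | V k ω ∈ a} = μ {ω | V 0 ω ∈ a} := by
  by_cases h1 : 1 ∈ a <;> by_cases h0 : 0 ∈ a
  · have h : ∀ m : ℤ, {ω | V m ω ∈ a} = Set.univ := by
      intro m; ext ω
      rcases hV01 m ω with h | h <;> simp [h, h0, h1]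
    rw [h k, h 0]
  · have h : ∀ m : ℤ, {ω | V m ω ∈ a} = {ω | V m ω = 1} := by
      intro m; ext ω
      rcases hV01 m ω with h | h <;> simp [h, h0, h1]
    rw [h k, h 0, hVp k, hVp 0]
  · have h : ∀ m : ℤ, {ω | V m ω ∈ a} = {ω | V m ω = 1}ᶜ := by
      intro m; ext ω
      rcases hV01 m ω with h | h <;> simp [h, h0, h1]
    have hm : ∀ m : ℤ, MeasurableSet {ω | V m ω = 1} := by
      intro m
      exact (hVmeas m) (measurableSet_singleton 1)
    rw [h k, h 0, measure_compl (hm k) (measure_ne_top μ _),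
      measure_compl (hm 0) (measure_ne_top μ _), hVp k, hVp 0]
  · have h : ∀ m : ℤ, {ω | V m ω ∈ a} = (∅ : Set Ω) := by
      intro m; ext ω
      rcases hV01 m ω with h | h <;> simp [h, h0, h1]
    rw [h k, h 0]

lemma V_cyl_shift' (hVmeas : ∀ k, Measurable (V k))
    (hV01 : ∀ k ω, V k ω = 0 ∨ V k ω = 1)
    (hViid : iIndepFun V μ) {p : ℝ}
    (hVp : ∀ k, μ {ω | V k ω = 1} = ENNReal.ofReal p)
    (δ : ℤ) (s : Finset ℤ) (a : ℤ → Set ℕ) (ha : ∀ i, MeasurableSet (a i)) :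
    μ {ω | ∀ i ∈ s, V (i + δ) ω ∈ a i} = μ {ω | ∀ i ∈ s, V i ω ∈ a i} := by
  have key : ∀ δ' : ℤ, μ {ω | ∀ i ∈ s, V (i + δ') ω ∈ a i}
      = ∏ i ∈ s, μ {ω | V 0 ω ∈ a i} := by
    intro δ'
    have hprod := hViid.measure_inter_preimage_eq_mul (s.image (· + δ'))
      (sets := fun k => a (k - δ')) (fun k _ => ha _)
    have hset : {ω | ∀ i ∈ s, V (i + δ') ω ∈ a i}
        = ⋂ k ∈ s.image (· + δ'), V k ⁻¹' a (k - δ') := by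
      ext ω
      simp only [Set.mem_setOf_eq, Set.mem_iInter, Finset.mem_image, Set.mem_preimage]
      constructor
      · rintro h k ⟨i, hi, rfl⟩
        simpa using h i hi
      · intro h i hi
        simpa using h (i + δ') ⟨i, hi, rfl⟩
    rw [hset, hprod, Finset.prod_image (fun x _ y _ h => by omega)]
    refine Finset.prod_congr rfl (fun i _ => ?_)
    have : V (i + δ') ⁻¹' a (i + δ' - δ') = {ω | V (i + δ') ω ∈ a i} := by
      simp only [add_sub_cancel_right]; rfl
    rw [this, V_mem_apply' hVmeas hV01 hVp (i + δ') (a i)]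
  have h0 : {ω | ∀ i ∈ s, V i ω ∈ a i} = {ω | ∀ i ∈ s, V (i + 0) ω ∈ a i} := by
    simp
  rw [key δ, h0, key 0]

lemma W_cyl_shift' (hWmeas : ∀ k, Measurable (W k))
    (hWstat : ∀ (i j : ℤ) (n : ℕ),
      Measure.map (fun ω => fun m : Fin n => W (i + m) ω) μ =
        Measure.map (fun ω => fun m : Fin n => W (j + m) ω) μ)
    (δ : ℤ) (t : Finset ℤ) (b : ℤ → Set ℝ) (hb : ∀ j, MeasurableSet (b j)) :
    μ {ω | ∀ j ∈ t, W (j + δ) ω ∈ b j} = μ {ω | ∀ j ∈ t, W j ω ∈ b j} := by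
  rcases Finset.eq_empty_or_nonempty t with rfl | hne
  · simp
  set L := t.min' hne with hL
  set n : ℕ := (t.max' hne - L).toNat + 1 with hn
  set D : Set (Fin n → ℝ) := {x | ∀ m : Fin n, L + (m : ℤ) ∈ t → x m ∈ b (L + (m : ℤ))} with hDdef
  have hD : MeasurableSet D := by
    have : D = ⋂ m : Fin n, {x : Fin n → ℝ | L + (m : ℤ) ∈ t → x m ∈ b (L + (m : ℤ))} := by
      ext x; simp [hDdef, Set.mem_iInter]
    rw [this]
    refine MeasurableSet.iInter (fun m => ?_)
    by_cases h : L + (m : ℤ) ∈ t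
    · simp only [h, true_implies]
      exact (measurable_pi_apply m) (hb _)
    · simp [h]
  have hmeas : ∀ i : ℤ, Measurable (fun ω => fun m : Fin n => W (i + m) ω) :=
    fun i => measurable_pi_lambda _ (fun m => hWmeas _)
  have hkey : ∀ j ∈ t, ∃ m : Fin n, L + (m : ℤ) = j := by
    intro j hj
    have h1 : L ≤ j := t.min'_le j hj
    have h2 : j ≤ t.max' hne := t.le_max' j hj
    refine ⟨⟨(j - L).toNat, by omega⟩, by simp; omega⟩
  have hpre : ∀ c : ℤ, (fun ω => fun m : Fin n => W (c + m) ω) ⁻¹' D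
      = {ω | ∀ j ∈ t, W (j - L + c) ω ∈ b j} := by
    intro c; ext ω
    simp only [Set.mem_preimage, hDdef, Set.mem_setOf_eq]
    constructor
    · intro h j hj
      obtain ⟨m, hm⟩ := hkey j hj
      have h2 := h m (by rw [hm]; exact hj)
      rw [show c + (m : ℤ) = (L + m) - L + c from by ring, hm] at h2
      exact h2
    · intro h m hm
      have h2 := h (L + m) hm
      rwa [show L + (m : ℤ) - L + c = c + m from by ring] at h2
  have e1 : {ω | ∀ j ∈ t, W (j - L + (L + δ)) ω ∈ b j} = {ω | ∀ j ∈ t, W (j + δ) ω ∈ b j} := by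
    have e : ∀ j : ℤ, j - L + (L + δ) = j + δ := fun j => by ring
    simp only [e]
  have e0 : {ω | ∀ j ∈ t, W (j - L + L) ω ∈ b j} = {ω | ∀ j ∈ t, W j ω ∈ b j} := by
    have e : ∀ j : ℤ, j - L + L = j := fun j => by ring
    simp only [e]
  calc μ {ω | ∀ j ∈ t, W (j + δ) ω ∈ b j}
      = Measure.map (fun ω => fun m : Fin n => W ((L + δ) + m) ω) μ D := by
        rw [Measure.map_apply (hmeas _) hD, hpre (L + δ), e1]
    _ = Measure.map (fun ω => fun m : Fin n => W (L + m) ω) μ D := by rw [hWstat (L + δ) L n]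
    _ = μ {ω | ∀ j ∈ t, W j ω ∈ b j} := by
        rw [Measure.map_apply (hmeas L) hD, hpre L, e0]

lemma law_shift (hWmeas : ∀ k, Measurable (W k)) (hVmeas : ∀ k, Measurable (V k))
    (hWstat : ∀ (i j : ℤ) (n : ℕ),
      Measure.map (fun ω => fun m : Fin n => W (i + m) ω) μ =
        Measure.map (fun ω => fun m : Fin n => W (j + m) ω) μ)
    (hV01 : ∀ k ω, V k ω = 0 ∨ V k ω = 1)
    (hViid : iIndepFun V μ) {p : ℝ}
    (hVp : ∀ k, μ {ω | V k ω = 1} = ENNReal.ofReal p)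
    (hindep : IndepFun (fun ω => fun k : ℤ => V k ω)
      (fun ω => fun k : ℤ => W k ω) μ) :
    Measure.map (fun ω => (fun k : ℤ => V (k + 1) ω,
        fun k : ℤ => W (k + (if V 1 ω = 1 then 1 else 0)) ω)) μ
      = Measure.map (fun ω => (fun k : ℤ => V k ω, fun k : ℤ => W k ω)) μ := by
  classical
  have hVseq : Measurable (fun ω => fun k : ℤ => V k ω) := measurable_pi_lambda _ hVmeas
  have hWseq : Measurable (fun ω => fun k : ℤ => W k ω) := measurable_pi_lambda _ hWmeas
  have hS : Measurable (fun ω => (fun k : ℤ => V k ω, fun k : ℤ => W k ω)) :=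
    hVseq.prodMk hWseq
  have hW'k : ∀ k : ℤ, Measurable (fun ω => W (k + (if V 1 ω = 1 then 1 else 0)) ω) := by
    intro k
    have he : (fun ω => W (k + (if V 1 ω = 1 then 1 else 0)) ω)
        = fun ω => if V 1 ω = 1 then W (k + 1) ω else W k ω := by
      funext ω; by_cases h : V 1 ω = 1 <;> simp [h]
    rw [he]
    exact Measurable.ite ((hVmeas 1) (measurableSet_singleton 1)) (hWmeas (k + 1)) (hWmeas k)
  have hS' : Measurable (fun ω => (fun k : ℤ => V (k + 1) ω,
      fun k : ℤ => W (k + (if V 1 ω = 1 then 1 else 0)) ω)) :=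
    (measurable_pi_lambda _ (fun k => hVmeas (k + 1))).prodMk (measurable_pi_lambda _ hW'k)
  -- the π-system of rectangles of square cylinders
  have hspan1 : IsCountablySpanning (squareCylinders (fun _ : ℤ => {s : Set ℕ | MeasurableSet s})) := by
    refine ⟨fun _ => Set.univ, fun n => ⟨∅, fun _ => Set.univ, fun i _ => Set.mem_setOf_eq.mpr MeasurableSet.univ, by simp⟩,
      by simp [Set.iUnion_const]⟩
  have hspan2 : IsCountablySpanning (squareCylinders (fun _ : ℤ => {s : Set ℝ | MeasurableSet s})) := by
    refine ⟨fun _ => Set.univ, fun n => ⟨∅, fun _ => Set.univ, fun i _ => Set.mem_setOf_eq.mpr MeasurableSet.univ, by simp⟩,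
      by simp [Set.iUnion_const]⟩
  have hgen : (inferInstance : MeasurableSpace ((ℤ → ℕ) × (ℤ → ℝ)))
      = MeasurableSpace.generateFrom (Set.image2 (· ×ˢ ·)
          (squareCylinders (fun _ : ℤ => {s : Set ℕ | MeasurableSet s}))
          (squareCylinders (fun _ : ℤ => {s : Set ℝ | MeasurableSet s}))) :=
    (generateFrom_eq_prod generateFrom_squareCylinders generateFrom_squareCylinders
      hspan1 hspan2).symm
  have hpi : IsPiSystem (Set.image2 (· ×ˢ ·)
      (squareCylinders (fun _ : ℤ => {s : Set ℕ | MeasurableSet s}))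
      (squareCylinders (fun _ : ℤ => {s : Set ℝ | MeasurableSet s}))) :=
    IsPiSystem.prod
      (isPiSystem_squareCylinders (fun _ => MeasurableSpace.isPiSystem_measurableSet) (fun _ => Set.mem_setOf_eq.mpr MeasurableSet.univ))
      (isPiSystem_squareCylinders (fun _ => MeasurableSpace.isPiSystem_measurableSet) (fun _ => Set.mem_setOf_eq.mpr MeasurableSet.univ))
  haveI := Measure.isProbabilityMeasure_map (μ := μ) hS'.aemeasurable
  refine ext_of_generate_finite _ hgen hpi ?_ ?_
  · rintro _ ⟨A, hA, B, hB, rfl⟩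
    obtain ⟨s, a, ha, rfl⟩ := hA
    obtain ⟨t, b, hb, rfl⟩ := hB
    have ha' : ∀ i, MeasurableSet (a i) := fun i => ha i (Set.mem_univ i)
    have hb' : ∀ j, MeasurableSet (b j) := fun j => hb j (Set.mem_univ j)
    have hAm : MeasurableSet ((s : Set ℤ).pi a) :=
      MeasurableSet.pi s.countable_toSet (fun i _ => ha' i)
    have hBm : MeasurableSet ((t : Set ℤ).pi b) :=
      MeasurableSet.pi t.countable_toSet (fun j _ => hb' j)
    rw [Measure.map_apply hS' (hAm.prod hBm), Measure.map_apply hS (hAm.prod hBm)]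
    -- names for the various events
    set Q1 : Set Ω := {ω | ∀ j ∈ t, W (j + 1) ω ∈ b j} with hQ1
    set Qp : Set Ω := {ω | ∀ j ∈ t, W j ω ∈ b j} with hQp
    set P : ℕ → Set Ω := fun c => {ω | (∀ i ∈ s, V (i + 1) ω ∈ a i) ∧ V 1 ω = c} with hP
    set R : ℕ → Set Ω := fun c => {ω | (∀ i ∈ s, V i ω ∈ a i) ∧ V 0 ω = c} with hR
    -- preimage identities
    have hpre' : (fun ω => (fun k : ℤ => V (k + 1) ω,
        fun k : ℤ => W (k + (if V 1 ω = 1 then 1 else 0)) ω)) ⁻¹'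
          ((s : Set ℤ).pi a ×ˢ (t : Set ℤ).pi b)
        = (P 1 ∩ Q1) ∪ (P 0 ∩ Qp) := by
      ext ω
      simp only [Set.mem_preimage, Set.mem_prod, Set.mem_pi, Finset.mem_coe, Set.mem_union,
        Set.mem_inter_iff, hP, hQ1, hQp, Set.mem_setOf_eq]
      rcases hV01 1 ω with h | h
      · have h' : ¬ (V 1 ω = 1) := by omega
        simp only [if_neg h']
        constructor
        · rintro ⟨hv, hw⟩
          refine Or.inr ⟨⟨hv, h⟩, fun j hj => by simpa using hw j hj⟩
        · rintro (⟨⟨hv, h1⟩, hw⟩ | ⟨⟨hv, h1⟩, hw⟩)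
          · omega
          · exact ⟨hv, fun j hj => by simpa using hw j hj⟩
      · simp only [if_pos h]
        constructor
        · rintro ⟨hv, hw⟩
          exact Or.inl ⟨⟨hv, h⟩, fun j hj => hw j hj⟩
        · rintro (⟨⟨hv, h1⟩, hw⟩ | ⟨⟨hv, h1⟩, hw⟩)
          · exact ⟨hv, fun j hj => hw j hj⟩
          · omega
    have hpre : (fun ω => (fun k : ℤ => V k ω, fun k : ℤ => W k ω)) ⁻¹'
          ((s : Set ℤ).pi a ×ˢ (t : Set ℤ).pi b)
        = (R 1 ∩ Qp) ∪ (R 0 ∩ Qp) := by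
      ext ω
      simp only [Set.mem_preimage, Set.mem_prod, Set.mem_pi, Finset.mem_coe, Set.mem_union,
        Set.mem_inter_iff, hR, hQp, Set.mem_setOf_eq]
      rcases hV01 0 ω with h | h
      · constructor
        · rintro ⟨hv, hw⟩; exact Or.inr ⟨⟨hv, h⟩, hw⟩
        · rintro (⟨⟨hv, _⟩, hw⟩ | ⟨⟨hv, _⟩, hw⟩) <;> exact ⟨hv, hw⟩
      · constructor
        · rintro ⟨hv, hw⟩; exact Or.inl ⟨⟨hv, h⟩, hw⟩
        · rintro (⟨⟨hv, _⟩, hw⟩ | ⟨⟨hv, _⟩, hw⟩) <;> exact ⟨hv, hw⟩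
    -- measurability of the pieces
    have hPmeas : ∀ c, MeasurableSet (P c) := by
      intro c
      have : P c = (⋂ i, ⋂ (_ : i ∈ s), (V (i + 1)) ⁻¹' (a i)) ∩ (V 1) ⁻¹' {c} := by
        ext ω; simp [hP, Set.mem_iInter]
      rw [this]
      exact (MeasurableSet.iInter fun i => MeasurableSet.iInter fun _ =>
        (hVmeas (i + 1)) (ha' i)).inter ((hVmeas 1) (measurableSet_singleton c))
    have hRmeas : ∀ c, MeasurableSet (R c) := by
      intro c
      have : R c = (⋂ i, ⋂ (_ : i ∈ s), (V i) ⁻¹' (a i)) ∩ (V 0) ⁻¹' {c} := by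
        ext ω; simp [hR, Set.mem_iInter]
      rw [this]
      exact (MeasurableSet.iInter fun i => MeasurableSet.iInter fun _ =>
        (hVmeas i) (ha' i)).inter ((hVmeas 0) (measurableSet_singleton c))
    have hQ1meas : MeasurableSet Q1 := by
      have : Q1 = ⋂ j, ⋂ (_ : j ∈ t), (W (j + 1)) ⁻¹' (b j) := by
        ext ω; simp [hQ1, Set.mem_iInter]
      rw [this]
      exact MeasurableSet.iInter fun j => MeasurableSet.iInter fun _ => (hWmeas (j + 1)) (hb' j)
    have hQpmeas : MeasurableSet Qp := by
      have : Qp = ⋂ j, ⋂ (_ : j ∈ t), (W j) ⁻¹' (b j) := by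
        ext ω; simp [hQp, Set.mem_iInter]
      rw [this]
      exact MeasurableSet.iInter fun j => MeasurableSet.iInter fun _ => (hWmeas j) (hb' j)
    -- GA/GB representations
    have hGA : ∀ c : ℕ, ∃ GA : Set (ℤ → ℕ), MeasurableSet GA ∧
        P c = (fun ω => fun k : ℤ => V k ω) ⁻¹' GA := by
      intro c
      refine ⟨{v : ℤ → ℕ | (∀ i ∈ s, v (i + 1) ∈ a i) ∧ v 1 = c}, ?_, rfl⟩
      have : {v : ℤ → ℕ | (∀ i ∈ s, v (i + 1) ∈ a i) ∧ v 1 = c}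
          = (⋂ i, ⋂ (_ : i ∈ s), (fun v : ℤ → ℕ => v (i + 1)) ⁻¹' (a i))
            ∩ (fun v : ℤ → ℕ => v 1) ⁻¹' {c} := by
        ext v; simp [Set.mem_iInter]
      rw [this]
      exact (MeasurableSet.iInter fun i => MeasurableSet.iInter fun _ =>
        (measurable_pi_apply (i + 1)) (ha' i)).inter
        ((measurable_pi_apply 1) (measurableSet_singleton c))
    have hGA' : ∀ c : ℕ, ∃ GA : Set (ℤ → ℕ), MeasurableSet GA ∧
        R c = (fun ω => fun k : ℤ => V k ω) ⁻¹' GA := by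
      intro c
      refine ⟨{v : ℤ → ℕ | (∀ i ∈ s, v i ∈ a i) ∧ v 0 = c}, ?_, rfl⟩
      have : {v : ℤ → ℕ | (∀ i ∈ s, v i ∈ a i) ∧ v 0 = c}
          = (⋂ i, ⋂ (_ : i ∈ s), (fun v : ℤ → ℕ => v i) ⁻¹' (a i))
            ∩ (fun v : ℤ → ℕ => v 0) ⁻¹' {c} := by
        ext v; simp [Set.mem_iInter]
      rw [this]
      exact (MeasurableSet.iInter fun i => MeasurableSet.iInter fun _ =>
        (measurable_pi_apply i) (ha' i)).inter
        ((measurable_pi_apply 0) (measurableSet_singleton c))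
    have hGB1 : ∃ GB : Set (ℤ → ℝ), MeasurableSet GB ∧
        Q1 = (fun ω => fun k : ℤ => W k ω) ⁻¹' GB := by
      refine ⟨{w : ℤ → ℝ | ∀ j ∈ t, w (j + 1) ∈ b j}, ?_, rfl⟩
      have : {w : ℤ → ℝ | ∀ j ∈ t, w (j + 1) ∈ b j}
          = ⋂ j, ⋂ (_ : j ∈ t), (fun w : ℤ → ℝ => w (j + 1)) ⁻¹' (b j) := by
        ext w; simp [Set.mem_iInter]
      rw [this]
      exact MeasurableSet.iInter fun j => MeasurableSet.iInter fun _ =>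
        (measurable_pi_apply (j + 1)) (hb' j)
    have hGBp : ∃ GB : Set (ℤ → ℝ), MeasurableSet GB ∧
        Qp = (fun ω => fun k : ℤ => W k ω) ⁻¹' GB := by
      refine ⟨{w : ℤ → ℝ | ∀ j ∈ t, w j ∈ b j}, ?_, rfl⟩
      have : {w : ℤ → ℝ | ∀ j ∈ t, w j ∈ b j}
          = ⋂ j, ⋂ (_ : j ∈ t), (fun w : ℤ → ℝ => w j) ⁻¹' (b j) := by
        ext w; simp [Set.mem_iInter]
      rw [this]
      exact MeasurableSet.iInter fun j => MeasurableSet.iInter fun _ =>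
        (measurable_pi_apply j) (hb' j)
    -- product formulas
    have hprod : ∀ c : ℕ, ∀ (Q : Set Ω), (∃ GB : Set (ℤ → ℝ), MeasurableSet GB ∧
        Q = (fun ω => fun k : ℤ => W k ω) ⁻¹' GB) → μ (P c ∩ Q) = μ (P c) * μ Q := by
      rintro c Q ⟨GB, hGBm, rfl⟩
      obtain ⟨GA, hGAm, hPA⟩ := hGA c
      rw [hPA]
      exact hindep.measure_inter_preimage_eq_mul _ _ hGAm hGBm
    have hprodR : ∀ c : ℕ, μ (R c ∩ Qp) = μ (R c) * μ Qp := by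
      intro c
      obtain ⟨GA, hGAm, hRA⟩ := hGA' c
      obtain ⟨GB, hGBm, hQB⟩ := hGBp
      rw [hRA, hQB]
      exact hindep.measure_inter_preimage_eq_mul _ _ hGAm hGBm
    -- shift invariance of the V parts : μ (P c) = μ (R c)
    have hPR : ∀ c : ℕ, μ (P c) = μ (R c) := by
      intro c
      set a' : ℤ → Set ℕ := fun i =>
        (if i ∈ s then a i else Set.univ) ∩ (if i = 0 then ({c} : Set ℕ) else Set.univ) with ha'def
      have ha'meas : ∀ i, MeasurableSet (a' i) := by
        intro i
        refine MeasurableSet.inter ?_ ?_ <;> split_ifs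
        · exact ha' i
        · exact MeasurableSet.univ
        · exact measurableSet_singleton c
        · exact MeasurableSet.univ
      have hPfmt : P c = {ω | ∀ i ∈ insert (0 : ℤ) s, V (i + 1) ω ∈ a' i} := by
        ext ω
        simp only [hP, Set.mem_setOf_eq, Finset.mem_insert, ha'def, Set.mem_inter_iff]
        constructor
        · rintro ⟨hv, h1⟩ i hi
          constructor
          · split_ifs with h'
            · exact hv i h'
            · trivial
          · split_ifs with h0
            · subst h0; simpa using h1
            · trivial
        · intro h
          constructor
          · intro i hi
            have := (h i (Or.inr hi)).1
            rwa [if_pos hi] at this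
          · have := (h 0 (Or.inl rfl)).2
            simpa using this
      have hRfmt : R c = {ω | ∀ i ∈ insert (0 : ℤ) s, V i ω ∈ a' i} := by
        ext ω
        simp only [hR, Set.mem_setOf_eq, Finset.mem_insert, ha'def, Set.mem_inter_iff]
        constructor
        · rintro ⟨hv, h1⟩ i hi
          constructor
          · split_ifs with h'
            · exact hv i h'
            · trivial
          · split_ifs with h0
            · subst h0; simpa using h1
            · trivial
        · intro h
          constructor
          · intro i hi
            have := (h i (Or.inr hi)).1
            rwa [if_pos hi] at this
          · have := (h 0 (Or.inl rfl)).2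
            simpa using this
      rw [hPfmt, hRfmt]
      exact V_cyl_shift' hVmeas hV01 hViid hVp 1 (insert 0 s) a' ha'meas
    -- shift invariance of the W part : μ Q1 = μ Qp
    have hQ1Qp : μ Q1 = μ Qp := by
      rw [hQ1, hQp]
      exact W_cyl_shift' hWmeas hWstat 1 t b hb'
    -- disjointness
    have hdisj : Disjoint (P 1 ∩ Q1) (P 0 ∩ Qp) := by
      refine Set.disjoint_left.mpr ?_
      rintro ω ⟨⟨_, h1⟩, _⟩ ⟨⟨_, h0⟩, _⟩
      omega
    have hdisjR : Disjoint (R 1 ∩ Qp) (R 0 ∩ Qp) := by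
      refine Set.disjoint_left.mpr ?_
      rintro ω ⟨⟨_, h1⟩, _⟩ ⟨⟨_, h0⟩, _⟩
      omega
    rw [hpre', hpre]
    rw [measure_union hdisj ((hPmeas 0).inter hQpmeas),
      measure_union hdisjR ((hRmeas 0).inter hQpmeas)]
    rw [hprod 1 Q1 hGB1, hprod 0 Qp hGBp, hprodR 1, hprodR 0, hPR 1, hPR 0, hQ1Qp]
  · rw [Measure.map_apply hS' MeasurableSet.univ, Measure.map_apply hS MeasurableSet.univ]
    simp

end spacedAux

/-- Let `(W_k)_{k∈ℤ}` be a strictly stationary sequence and `(V_k)_{k∈ℤ}`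
i.i.d. Bernoulli(`p`), `0 < p < 1`, independent of `W`.  Then the spaced
sequence `W̃ = S(W,V)` is strictly stationary. -/
theorem spaced_sequence_strictly_stationary
    {Ω : Type*} [MeasurableSpace Ω] (μ : Measure Ω) [IsProbabilityMeasure μ]
    (W : ℤ → Ω → ℝ) (V : ℤ → Ω → ℕ)
    (hWmeas : ∀ k, Measurable (W k)) (hVmeas : ∀ k, Measurable (V k))
    (hWstat : ∀ (i j : ℤ) (n : ℕ),
      Measure.map (fun ω => fun m : Fin n => W (i + m) ω) μ =
        Measure.map (fun ω => fun m : Fin n => W (j + m) ω) μ)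
    (p : ℝ) (hp0 : 0 < p) (hp1 : p < 1)
    (hV01 : ∀ k ω, V k ω = 0 ∨ V k ω = 1)
    (hViid : iIndepFun V μ)
    (hVp : ∀ k, μ {ω | V k ω = 1} = ENNReal.ofReal p)
    (hindep : IndepFun (fun ω => fun k : ℤ => V k ω)
      (fun ω => fun k : ℤ => W k ω) μ) :
    ∀ (i j : ℤ) (n : ℕ),
      Measure.map (fun ω => fun m : Fin n => spacedSeq W V (i + m) ω) μ =
        Measure.map (fun ω => fun m : Fin n => spacedSeq W V (j + m) ω) μ := by
  classical
  have hVseq : Measurable (fun ω => fun k : ℤ => V k ω) := measurable_pi_lambda _ hVmeas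
  have hWseq : Measurable (fun ω => fun k : ℤ => W k ω) := measurable_pi_lambda _ hWmeas
  have hS : Measurable (fun ω => (fun k : ℤ => V k ω, fun k : ℤ => W k ω)) :=
    hVseq.prodMk hWseq
  have hW'k : ∀ k : ℤ, Measurable (fun ω => W (k + (if V 1 ω = 1 then 1 else 0)) ω) := by
    intro k
    have he : (fun ω => W (k + (if V 1 ω = 1 then 1 else 0)) ω)
        = fun ω => if V 1 ω = 1 then W (k + 1) ω else W k ω := by
      funext ω; by_cases h : V 1 ω = 1 <;> simp [h]
    rw [he]
    exact Measurable.ite ((hVmeas 1) (measurableSet_singleton 1)) (hWmeas (k + 1)) (hWmeas k)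
  have hS' : Measurable (fun ω => (fun k : ℤ => V (k + 1) ω,
      fun k : ℤ => W (k + (if V 1 ω = 1 then 1 else 0)) ω)) :=
    (measurable_pi_lambda _ (fun k => hVmeas (k + 1))).prodMk (measurable_pi_lambda _ hW'k)
  have hlaw := law_shift hWmeas hVmeas hWstat hV01 hViid hVp hindep
  have hstep : ∀ (i : ℤ) (n : ℕ),
      Measure.map (fun ω => fun m : Fin n => spacedSeq W V (i + 1 + m) ω) μ
        = Measure.map (fun ω => fun m : Fin n => spacedSeq W V (i + m) ω) μ := by
    intro i n
    have hG : Measurable (fun q : (ℤ → ℕ) × (ℤ → ℝ) => fun m : Fin n => Phi (i + m) q) :=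
      measurable_pi_lambda _ (fun m => measurable_Phi _)
    have hid : (fun ω => fun m : Fin n => spacedSeq W V (i + 1 + m) ω)
        = (fun q : (ℤ → ℕ) × (ℤ → ℝ) => fun m : Fin n => Phi (i + m) q)
          ∘ (fun ω => (fun k : ℤ => V (k + 1) ω,
              fun k : ℤ => W (k + (if V 1 ω = 1 then 1 else 0)) ω)) := by
      funext ω
      funext m
      have h1 : i + 1 + (m : ℤ) = (i + (m : ℤ)) + 1 := by ring
      rw [h1, spacedSeq_shift]
      rfl
    have hid2 : (fun ω => fun m : Fin n => spacedSeq W V (i + m) ω)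
        = (fun q : (ℤ → ℕ) × (ℤ → ℝ) => fun m : Fin n => Phi (i + m) q)
          ∘ (fun ω => (fun k : ℤ => V k ω, fun k : ℤ => W k ω)) := rfl
    rw [hid, hid2, ← Measure.map_map hG hS', ← Measure.map_map hG hS, hlaw]
  intro i j n
  suffices H : ∀ i : ℤ,
      Measure.map (fun ω => fun m : Fin n => spacedSeq W V (i + m) ω) μ
        = Measure.map (fun ω => fun m : Fin n => spacedSeq W V ((0 : ℤ) + m) ω) μ by
    rw [H i, H j]
  intro i
  induction i using Int.induction_on with
  | zero => rfl
  | succ k ih => exact (hstep k n).trans ih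
  | pred k ih =>
      have h := hstep (-(k : ℤ) - 1) n
      have e : (fun ω => fun m : Fin n => spacedSeq W V (-(k : ℤ) - 1 + 1 + m) ω)
          = fun ω => fun m : Fin n => spacedSeq W V (-(k : ℤ) + m) ω := by
        funext ω m
        rw [show (-(k : ℤ) - 1 + 1 : ℤ) = -(k : ℤ) from by ring]
      rw [e] at h
      exact (show (-(k : ℤ) - 1) = -((k : ℤ) + 1) from by ring) ▸ (h.symm.trans ih)
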